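/- Let K ⊆ ℕ and let K[·] be an approximation of K (K[s] ⊆ K[s+1] for all s and K = ⋃_s K[s]). Let m, n be positive integers such that: (1) μ(m) < λ(n); (2) for all x ≤ μ(m), x ∈ K if and only if x ∈ K[λ(n)]; (3) μ(m+n) = μ(n). Then a gap of m is very short in m + n if and only if it is short in m. -/
import Mathlib


/-- `lam n` is the least exponent in the binary expansion of `n`
(the 2-adic valuation of `n`). -/
def lam (n : ℕ) : ℕ := padicValNat 2 n

/-- `mu n` is the greatest exponent in the binary expansion of `n`. -/
def mu (n : ℕ) : ℕ := Nat.log 2 n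

/-- A set `X` of positive integers is apart if for all `x < x'` in `X`,
`μ(x) < λ(x')`. -/
def ApartSet (X : Set ℕ) : Prop :=
  (∀ x ∈ X, 0 < x) ∧ ∀ x ∈ X, ∀ y ∈ X, x < y → mu x < lam y

/-- `FSeq j B` is the set of sums of `j` distinct elements of `B`. -/
def FSeq (j : ℕ) (B : Set ℕ) : Set ℕ :=
  {n | ∃ F : Finset ℕ, ↑F ⊆ B ∧ F.card = j ∧ ∑ x ∈ F, x = n}

/-- `FSin A B = ⋃ j ∈ A, FSeq j B`. -/
def FSin (A B : Set ℕ) : Set ℕ := ⋃ j ∈ A, FSeq j B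

/-- A set is monochromatic under a coloring `c` if `c` is constant on it. -/
def MonoChr {r : ℕ} (c : ℕ → Fin r) (S : Set ℕ) : Prop :=
  ∀ x ∈ S, ∀ y ∈ S, c x = c y

/-- The gaps of `n`: pairs of consecutive exponents in the binary expansion. -/
def gaps (n : ℕ) : Set (ℕ × ℕ) :=
  {p | n.testBit p.1 ∧ n.testBit p.2 ∧ p.1 < p.2 ∧
    ∀ t, p.1 < t → t < p.2 → ¬ n.testBit t}

/-- The gap `p` of `n` is short in `n` (w.r.t. `K` and approximation `Kapp`). -/
def ShortGap (K : Set ℕ) (Kapp : ℕ → Set ℕ) (n : ℕ) (p : ℕ × ℕ) : Prop :=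
  p ∈ gaps n ∧ ∃ x ≤ p.1, x ∈ K ∧ x ∉ Kapp p.2

/-- The gap `p` of `n` is very short in `n` (w.r.t. approximation `Kapp`). -/
def VeryShortGap (Kapp : ℕ → Set ℕ) (n : ℕ) (p : ℕ × ℕ) : Prop :=
  p ∈ gaps n ∧ ∃ x ≤ p.1, x ∈ Kapp (mu n) ∧ x ∉ Kapp p.2

/-- `SG K Kapp n` is the number of short gaps of `n`. -/
noncomputable def SG (K : Set ℕ) (Kapp : ℕ → Set ℕ) (n : ℕ) : ℕ :=
  {p : ℕ × ℕ | ShortGap K Kapp n p}.ncard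

/-- `VSG Kapp n` is the number of very short gaps of `n`. -/
noncomputable def VSG (Kapp : ℕ → Set ℕ) (n : ℕ) : ℕ :=
  {p : ℕ × ℕ | VeryShortGap Kapp n p}.ncard

lemma Kapp_mono {Kapp : ℕ → Set ℕ} (hmono : ∀ s, Kapp s ⊆ Kapp (s + 1)) :
    ∀ {s t : ℕ}, s ≤ t → Kapp s ⊆ Kapp t := by
  intro s t hst
  induction hst with
  | refl => exact subset_rfl
  | step _ ih => exact ih.trans (hmono _)

lemma testBit_le_mu {m t : ℕ} (h : m.testBit t = true) : t ≤ mu m := by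
  have h2 : 2 ^ t ≤ m := Nat.ge_two_pow_of_testBit h
  exact Nat.le_log_of_pow_le one_lt_two h2

theorem very_short_gap_of_left_summand (K : Set ℕ) (Kapp : ℕ → Set ℕ)
    (hmono : ∀ s, Kapp s ⊆ Kapp (s + 1)) (hK : K = ⋃ s, Kapp s)
    (m n : ℕ) (hm : 0 < m) (hn : 0 < n)
    (h1 : mu m < lam n)
    (h2 : ∀ x ≤ mu m, (x ∈ K ↔ x ∈ Kapp (lam n)))
    (h3 : mu (m + n) = mu n) :
    ∀ p ∈ gaps m, (VeryShortGap Kapp (m + n) p ↔ ShortGap K Kapp m p) := by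
  intro p hp
  obtain ⟨hb1, hb2, hlt, hbetween⟩ := hp
  have hdvd : (2 : ℕ) ^ lam n ∣ n := pow_padicValNat_dvd
  have hmlt : m < 2 ^ lam n := by
    calc m < 2 ^ (mu m + 1) := Nat.lt_pow_succ_log_self one_lt_two m
    _ ≤ 2 ^ lam n := Nat.pow_le_pow_right (by norm_num) h1
  have hbit : ∀ t, t ≤ mu m → (m + n).testBit t = m.testBit t := by
    intro t ht
    have htl : t < lam n := lt_of_le_of_lt ht h1
    have hmod : (m + n) % 2 ^ lam n = m := by
      have hn0 : n % 2 ^ lam n = 0 := Nat.mod_eq_zero_of_dvd hdvd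
      rw [Nat.add_mod, hn0, Nat.add_zero, Nat.mod_mod_of_dvd _ dvd_rfl,
        Nat.mod_eq_of_lt hmlt]
    have e1 := Nat.testBit_mod_two_pow (m + n) (lam n) t
    rw [hmod, decide_eq_true htl, Bool.true_and] at e1
    exact e1.symm
  have hp2mu : p.2 ≤ mu m := testBit_le_mu hb2
  have hpgap : p ∈ gaps (m + n) := by
    refine ⟨?_, ?_, hlt, ?_⟩
    · rw [hbit p.1 (le_trans hlt.le hp2mu)]; exact hb1
    · rw [hbit p.2 hp2mu]; exact hb2
    · intro t ht1 ht2
      rw [hbit t (le_trans ht2.le hp2mu)]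
      exact hbetween t ht1 ht2
  have hlam_le_mu : lam n ≤ mu n :=
    Nat.le_log_of_pow_le one_lt_two (Nat.le_of_dvd hn hdvd)
  constructor
  · rintro ⟨_, x, hx1, hx2, hx3⟩
    refine ⟨⟨hb1, hb2, hlt, hbetween⟩, x, hx1, ?_, hx3⟩
    rw [hK]; exact Set.mem_iUnion.mpr ⟨_, hx2⟩
  · rintro ⟨_, x, hx1, hx2, hx3⟩
    refine ⟨hpgap, x, hx1, ?_, hx3⟩
    have hxm : x ≤ mu m := le_trans hx1 (le_trans hlt.le hp2mu)
    have := (h2 x hxm).mp hx2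
    rw [h3]
    exact Kapp_mono hmono hlam_le_mu this
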